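/- Let A be a coherent integral domain and let M be a finitely presented A-module. Then the canonical double-dual map φ_M : M → M^∨∨ = Hom_A(Hom_A(M,A),A) is injective if and only if M is torsion-free. -/

import Mathlib

open CategoryTheory

/-- A ring is *coherent* if every finitely generated ideal is finitely presented. -/
def IsCoherentRing (A : Type) [CommRing A] : Prop :=
  ∀ I : Ideal A, I.FG → Module.FinitePresentation A I

/-- Over a coherent domain, for a finitely presented module `M` the canonical map to the
double dual is injective iff `M` is torsion-free. -/
theorem stmt_1 (A : Type) [CommRing A] [IsDomain A] (hA : IsCoherentRing A)
    (M : Type) [AddCommGroup M] [Module A M] [Module.FinitePresentation A M] :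
    Function.Injective (Module.Dual.eval A M) ↔ NoZeroSMulDivisors A M := by
  constructor
  · -- forward: the double dual is torsion-free, pull back
    intro h
    refine ⟨fun {a m} ham => ?_⟩
    by_contra hcon
    push_neg at hcon
    obtain ⟨ha, hm⟩ := hcon
    apply hm
    apply h
    ext f
    have : f (a • m) = 0 := by rw [ham]; simp
    rw [map_smul, smul_eq_mul] at this
    have hf : f m = 0 := (mul_eq_zero.mp this).resolve_left ha
    simp [Module.Dual.eval, hf]
  · intro hM
    intro x y hxy
    rw [← sub_eq_zero]
    set m := x - y with hm
    by_contra hne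
    have hev : Module.Dual.eval A M m = 0 := by
      simp only [hm, map_sub, hxy, sub_self]
    -- localize at the nonzero divisors
    set S := nonZeroDivisors A
    let K := FractionRing A
    let V := LocalizedModule S M
    let ι : M →ₗ[A] V := LocalizedModule.mkLinearMap S M
    have hι : Function.Injective ι := by
      rw [← LinearMap.ker_eq_bot, Submodule.eq_bot_iff]
      intro z hz
      rw [LocalizedModule.mem_ker_mkLinearMap_iff] at hz
      obtain ⟨r, hr, hrz⟩ := hz
      exact (smul_eq_zero.mp hrz).resolve_left (nonZeroDivisors.ne_zero hr)
    have hιm : ι m ≠ 0 := fun h => hne (hι (by simpa using h))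
    -- find a K-linear functional not vanishing on ι m
    have : ¬ ∀ g : Module.Dual K V, g (ι m) = 0 := by
      rw [Module.forall_dual_apply_eq_zero_iff]
      exact hιm
    push_neg at this
    obtain ⟨g, hg⟩ := this
    let φ : M →ₗ[A] K := (g.restrictScalars A) ∘ₗ ι
    have hφm : φ m ≠ 0 := hg
    -- clear denominators on a finite generating set
    have : Module.Finite A M := inferInstance
    obtain ⟨s, hs⟩ := this.fg_top
    obtain ⟨b, hb⟩ := IsLocalization.exist_integer_multiples S s (fun x : M => φ x)
    let ψ : M →ₗ[A] K := (b : A) • φ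
    have hψrange : ∀ z : M, ψ z ∈ LinearMap.range (Algebra.linearMap A K) := by
      have hle : Submodule.span A (s : Set M) ≤
          (LinearMap.range (Algebra.linearMap A K)).comap ψ := by
        rw [Submodule.span_le]
        intro z hz
        obtain ⟨a, ha⟩ := hb z hz
        exact ⟨a, ha⟩
      intro z
      have hz : z ∈ Submodule.span A (s : Set M) := by rw [hs]; trivial
      exact hle hz
    have halg : Function.Injective (Algebra.linearMap A K) := by
      intro a b h
      exact IsFractionRing.injective A K h
    let e := LinearEquiv.ofInjective (Algebra.linearMap A K) halg
    let f : M →ₗ[A] A := e.symm.toLinearMap ∘ₗ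
      (ψ.codRestrict (LinearMap.range (Algebra.linearMap A K)) hψrange)
    have hfm : f m ≠ 0 := by
      intro h0
      have : ψ m = 0 := by
        have := congrArg (fun a => (Algebra.linearMap A K) a) h0
        simp only [map_zero] at this
        have h1 : (Algebra.linearMap A K) (f m) = ψ m := by
          show (Algebra.linearMap A K) (e.symm
            (ψ.codRestrict (LinearMap.range (Algebra.linearMap A K)) hψrange m)) = ψ m
          rw [LinearEquiv.ofInjective_symm_apply]
          rfl
        rw [← h1, h0, map_zero]
      have hb0 : algebraMap A K (b : A) ≠ 0 := by
        simpa using (IsFractionRing.to_map_ne_zero_iff_mem_nonZeroDivisors (A := A) (K := K)).mpr b.2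
      have : algebraMap A K (b : A) * φ m = 0 := by
        simpa [ψ, Algebra.smul_def] using this
      exact hφm ((mul_eq_zero.mp this).resolve_left hb0)
    exact hfm (by simpa using congrFun (congrArg DFunLike.coe hev) f)
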